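/- Let a, b ≥ 2 be integers and let f = X₁² + X₂² + X₃^a + X₃·X₄^b in the polynomial ring ℂ[X₁, X₂, X₃, X₄]. Then the quotient ring ℂ[X₁, X₂, X₃, X₄]/⟨∂f/∂X₁, ∂f/∂X₂, ∂f/∂X₃, ∂f/∂X₄⟩ is a finite-dimensional ℂ-vector space of dimension a(b-1) + 1. -/

import Mathlib

open MvPolynomial

/-- The Jacobian ideal of a polynomial in four variables: the ideal generated by
its four partial derivatives. -/
noncomputable def jacobianIdeal (f : MvPolynomial (Fin 4) ℂ) : Ideal (MvPolynomial (Fin 4) ℂ) :=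
  Ideal.span {pderiv 0 f, pderiv 1 f, pderiv 2 f, pderiv 3 f}

namespace MilnorDualChain

abbrev P4 := MvPolynomial (Fin 4) ℂ

/-- Shift (contraction by a monomial) operator. -/
noncomputable def shift (k : Fin 4 →₀ ℕ) : P4 →ₗ[ℂ] P4 where
  toFun F := AddMonoidAlgebra.ofCoeff (Finsupp.comapDomain (· + k) (AddMonoidAlgebra.coeff F) (add_left_injective k).injOn)
  map_add' x y := congrArg AddMonoidAlgebra.ofCoeff
    (Finsupp.comapDomain_add_of_injective (add_left_injective k) (AddMonoidAlgebra.coeff x) (AddMonoidAlgebra.coeff y))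
  map_smul' c x := congrArg AddMonoidAlgebra.ofCoeff
    (Finsupp.comapDomain_smul_of_injective (add_left_injective k) c (AddMonoidAlgebra.coeff x))

lemma coeff_shift (k m : Fin 4 →₀ ℕ) (F : P4) : coeff m (shift k F) = coeff (m + k) F := rfl

/-- The contraction action of polynomials on polynomials. -/
noncomputable def eps : P4 →ₐ[ℂ] Module.End ℂ P4 :=
  AddMonoidAlgebra.lift ℂ (Module.End ℂ P4) (Fin 4 →₀ ℕ)
    { toFun := fun k => shift k.toAdd
      map_one' := by
        apply LinearMap.ext; intro F; apply MvPolynomial.ext; intro m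
        simp [coeff_shift]
      map_mul' := fun x y => by
        apply LinearMap.ext; intro F; apply MvPolynomial.ext; intro m
        show coeff m (shift _ F) = coeff m (shift _ (shift _ F))
        simp [coeff_shift, add_assoc] }

lemma eps_monomial (k : Fin 4 →₀ ℕ) (c : ℂ) : eps (monomial k c) = c • shift k := by
  rw [← single_eq_monomial]
  exact AddMonoidAlgebra.lift_single (R := ℂ) (A := Module.End ℂ P4) _ _ _

/-- Exponent vector `(0,0,i,j)`. -/
noncomputable def E (i j : ℕ) : Fin 4 →₀ ℕ := Finsupp.single 2 i + Finsupp.single 3 j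

@[simp] lemma E_apply0 (i j : ℕ) : E i j 0 = 0 := by simp [E, Finsupp.single_apply]
@[simp] lemma E_apply1 (i j : ℕ) : E i j 1 = 0 := by simp [E, Finsupp.single_apply]
@[simp] lemma E_apply2 (i j : ℕ) : E i j 2 = i := by simp [E, Finsupp.single_apply]
@[simp] lemma E_apply3 (i j : ℕ) : E i j 3 = j := by simp [E, Finsupp.single_apply]

lemma E_add_E (i j i' j' : ℕ) : E i j + E i' j' = E (i + i') (j + j') := by
  ext t; fin_cases t <;> simp

lemma E_eq_E_iff {i j i' j' : ℕ} : E i j = E i' j' ↔ i = i' ∧ j = j' := by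
  constructor
  · intro h
    constructor
    · have := DFunLike.congr_fun h 2; simpa using this
    · have := DFunLike.congr_fun h 3; simpa using this
  · rintro ⟨rfl, rfl⟩; rfl

lemma eq_E_self (m : Fin 4 →₀ ℕ) (h0 : m 0 = 0) (h1 : m 1 = 0) : m = E (m 2) (m 3) := by
  ext t; fin_cases t <;> simp [h0, h1]

lemma monomial_E (i j : ℕ) : (monomial (E i j) (1:ℂ) : P4) = X 2 ^ i * X 3 ^ j := by
  rw [E, ← single_eq_monomial]
  rw [X_pow_eq_monomial, X_pow_eq_monomial, monomial_mul, one_mul, single_eq_monomial]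

section Main

variable (a b : ℕ)

/-- The dual socle generator. -/
noncomputable def Fd : P4 :=
  monomial (E (a-1) (b-2)) 1 + monomial (E 0 (2*b-2)) (-(a:ℂ))

lemma coeff_Fd (m : Fin 4 →₀ ℕ) :
    coeff m (Fd a b) = (if E (a-1) (b-2) = m then (1:ℂ) else 0)
      + (if E 0 (2*b-2) = m then (-(a:ℂ)) else 0) := by
  classical
  simp only [Fd, coeff_add, coeff_monomial]

/-- Normalized generators of the Jacobian ideal. -/
def gens : Set P4 :=
  {X 0, X 1, C (a:ℂ) * X 2 ^ (a-1) + X 3 ^ b, X 2 * X 3 ^ (b-1)}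

variable (ha : 2 ≤ a) (hb : 2 ≤ b)
include ha hb

lemma J_eq :
    jacobianIdeal (X 0 ^ 2 + X 1 ^ 2 + X 2 ^ a + X 2 * X 3 ^ b : P4)
      = Ideal.span (gens a b) := by
  have ha0 : (a:ℂ) ≠ 0 := Nat.cast_ne_zero.mpr (by omega)
  have hb0 : (b:ℂ) ≠ 0 := Nat.cast_ne_zero.mpr (by omega)
  have hp0 : pderiv (0:Fin 4) (X 0 ^ 2 + X 1 ^ 2 + X 2 ^ a + X 2 * X 3 ^ b : P4)
      = C 2 * X 0 := by simp [pderiv_pow, map_ofNat]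
  have hp1 : pderiv (1:Fin 4) (X 0 ^ 2 + X 1 ^ 2 + X 2 ^ a + X 2 * X 3 ^ b : P4)
      = C 2 * X 1 := by simp [pderiv_pow, map_ofNat]
  have hp2 : pderiv (2:Fin 4) (X 0 ^ 2 + X 1 ^ 2 + X 2 ^ a + X 2 * X 3 ^ b : P4)
      = C (a:ℂ) * X 2 ^ (a-1) + X 3 ^ b := by simp [pderiv_pow]
  have hp3 : pderiv (3:Fin 4) (X 0 ^ 2 + X 1 ^ 2 + X 2 ^ a + X 2 * X 3 ^ b : P4)
      = C (b:ℂ) * (X 2 * X 3 ^ (b-1)) := by simp [pderiv_pow]; ring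
  rw [jacobianIdeal, hp0, hp1, hp2, hp3]
  apply le_antisymm
  · rw [Ideal.span_le]
    rintro x (rfl | rfl | rfl | rfl)
    · exact Ideal.mul_mem_left _ _ (Ideal.subset_span (Set.mem_insert _ _))
    · exact Ideal.mul_mem_left _ _
        (Ideal.subset_span (Set.mem_insert_of_mem _ (Set.mem_insert _ _)))
    · exact Ideal.subset_span
        (Set.mem_insert_of_mem _ (Set.mem_insert_of_mem _ (Set.mem_insert _ _)))
    · exact Ideal.mul_mem_left _ _ (Ideal.subset_span
        (Set.mem_insert_of_mem _ (Set.mem_insert_of_mem _ (Set.mem_insert_of_mem _ rfl))))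
  · rw [Ideal.span_le]
    rintro x (rfl | rfl | rfl | rfl)
    · have h := Ideal.mul_mem_left _ (C (2⁻¹ : ℂ))
        (Ideal.subset_span (Set.mem_insert (C 2 * X 0 : P4)
          {C 2 * X 1, C (a:ℂ) * X 2 ^ (a-1) + X 3 ^ b, C (b:ℂ) * (X 2 * X 3 ^ (b-1))}))
      rw [show C (2⁻¹:ℂ) * (C 2 * X 0) = (X 0 : P4) from by
        rw [← mul_assoc, ← C_mul]; norm_num] at h
      exact SetLike.mem_coe.mpr h
    · have h := Ideal.mul_mem_left _ (C (2⁻¹ : ℂ))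
        (Ideal.subset_span (Set.mem_insert_of_mem (C 2 * X 0 : P4) (Set.mem_insert (C 2 * X 1 : P4)
          {C (a:ℂ) * X 2 ^ (a-1) + X 3 ^ b, C (b:ℂ) * (X 2 * X 3 ^ (b-1))})))
      rw [show C (2⁻¹:ℂ) * (C 2 * X 1) = (X 1 : P4) from by
        rw [← mul_assoc, ← C_mul]; norm_num] at h
      exact SetLike.mem_coe.mpr h
    · exact Ideal.subset_span
        (Set.mem_insert_of_mem _ (Set.mem_insert_of_mem _ (Set.mem_insert _ _)))
    · have h := Ideal.mul_mem_left _ (C ((b:ℂ)⁻¹))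
        (Ideal.subset_span (Set.mem_insert_of_mem (C 2 * X 0 : P4)
          (Set.mem_insert_of_mem (C 2 * X 1 : P4)
            (Set.mem_insert_of_mem (C (a:ℂ) * X 2 ^ (a-1) + X 3 ^ b)
              (Set.mem_singleton (C (b:ℂ) * (X 2 * X 3 ^ (b-1))))))))
      rw [show C ((b:ℂ)⁻¹) * (C (b:ℂ) * (X 2 * X 3 ^ (b-1))) = (X 2 * X 3 ^ (b-1) : P4) from by
        rw [← mul_assoc, ← C_mul, inv_mul_cancel₀ hb0, C_1, one_mul]] at h
      exact SetLike.mem_coe.mpr h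

end Main

lemma E_eq_add_iff (i j : ℕ) (m k : Fin 4 →₀ ℕ) :
    E i j = m + k ↔ (m 0 + k 0 = 0 ∧ m 1 + k 1 = 0 ∧ i = m 2 + k 2 ∧ j = m 3 + k 3) := by
  constructor
  · intro h
    have h0 := DFunLike.congr_fun h 0
    have h1 := DFunLike.congr_fun h 1
    have h2 := DFunLike.congr_fun h 2
    have h3 := DFunLike.congr_fun h 3
    simp only [Finsupp.add_apply, E_apply0, E_apply1, E_apply2, E_apply3] at h0 h1 h2 h3
    omega
  · rintro ⟨h0, h1, h2, h3⟩
    ext t; fin_cases t <;> simp [Finsupp.add_apply] <;> omega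

lemma eps_XX (i j : ℕ) : eps (X 2 ^ i * X 3 ^ j : P4) = shift (E i j) := by
  rw [← monomial_E, eps_monomial, one_smul]

lemma eps_X (n : Fin 4) : eps (X n : P4) = shift (Finsupp.single n 1) := by
  rw [← pow_one (X n : P4), X_pow_eq_monomial, eps_monomial, one_smul]

section Main2

variable (a b : ℕ)

/-- The "annihilator of the dual socle generator" ideal. -/
noncomputable def K : Ideal P4 where
  carrier := {p | eps p (Fd a b) = 0}
  add_mem' := fun {x y} hx hy => by
    have hx' : eps x (Fd a b) = 0 := hx
    have hy' : eps y (Fd a b) = 0 := hy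
    show eps (x + y) (Fd a b) = 0
    rw [map_add, LinearMap.add_apply, hx', hy', add_zero]
  zero_mem' := by show eps 0 (Fd a b) = 0; rw [map_zero]; rfl
  smul_mem' := fun c x hx => by
    have hx' : eps x (Fd a b) = 0 := hx
    show eps (c • x) (Fd a b) = 0
    rw [smul_eq_mul, map_mul, Module.End.mul_apply, hx', map_zero]

lemma mem_K_iff (p : P4) : p ∈ K a b ↔ eps p (Fd a b) = 0 := Iff.rfl

variable (ha : 2 ≤ a) (hb : 2 ≤ b)
include ha hb

lemma span_gens_le_K : Ideal.span (gens a b) ≤ K a b := by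
  classical
  rw [Ideal.span_le]
  rintro x (rfl | rfl | rfl | rfl) <;> rw [SetLike.mem_coe, mem_K_iff]
  · rw [eps_X]
    apply MvPolynomial.ext; intro m
    rw [coeff_shift, coeff_Fd]
    simp only [E_eq_add_iff, Finsupp.single_apply]
    norm_num
  · rw [eps_X]
    apply MvPolynomial.ext; intro m
    rw [coeff_shift, coeff_Fd]
    simp only [E_eq_add_iff, Finsupp.single_apply]
    norm_num
  · have h1 : (C (a:ℂ) * X 2 ^ (a-1) + X 3 ^ b : P4)
        = C (a:ℂ) * (X 2 ^ (a-1) * X 3 ^ 0) + X 2 ^ 0 * X 3 ^ b := by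
      rw [pow_zero, pow_zero, mul_one, one_mul]
    rw [h1, map_add, map_mul, eps_XX, eps_XX, ← MvPolynomial.algebraMap_eq,
      AlgHom.commutes, Algebra.algebraMap_eq_smul_one, smul_mul_assoc, one_mul]
    apply MvPolynomial.ext; intro m
    rw [LinearMap.add_apply, LinearMap.smul_apply, coeff_add, coeff_smul,
      coeff_shift, coeff_shift, coeff_Fd, coeff_Fd, coeff_zero]
    simp only [E_eq_add_iff, E_apply0, E_apply1, E_apply2, E_apply3, smul_eq_mul]
    split_ifs <;> first | ring1 | (exfalso; omega) | simp_all
  · have h1 : (X 2 * X 3 ^ (b-1) : P4) = X 2 ^ 1 * X 3 ^ (b-1) := by rw [pow_one]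
    rw [h1, eps_XX]
    apply MvPolynomial.ext; intro m
    rw [coeff_shift, coeff_Fd, coeff_zero]
    simp only [E_eq_add_iff, E_apply0, E_apply1, E_apply2, E_apply3]
    split_ifs <;> first | ring1 | (exfalso; omega) | simp_all

end Main2


section Main3

variable (a b : ℕ)

/-- Index type for the monomial basis. -/
abbrev Idx := (Fin a × Fin (b-1)) ⊕ Unit

/-- Exponents of the basis monomials. -/
noncomputable def e : Idx a b → (Fin 4 →₀ ℕ)
  | .inl (i, j) => E i j
  | .inr _ => E 0 (b-1)

/-- Detection exponents for the dual pairing. -/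
noncomputable def mu : Idx a b → (Fin 4 →₀ ℕ)
  | .inl (i, j) => E (a-1-i) (b-2-j)
  | .inr _ => E 0 (b-1)

/-- The quotient by the (normalized) Jacobian ideal. -/
abbrev Rq := P4 ⧸ Ideal.span (gens a b)

noncomputable def piq : P4 →ₐ[ℂ] Rq a b := Ideal.Quotient.mkₐ ℂ (Ideal.span (gens a b))

/-- The candidate basis. -/
noncomputable def v : Idx a b → Rq a b := fun i => piq a b (monomial (e a b i) 1)

lemma mem_gens3 : (C (a:ℂ) * X 2 ^ (a-1) + X 3 ^ b : P4) ∈ gens a b :=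
  Set.mem_insert_of_mem _ (Set.mem_insert_of_mem _ (Set.mem_insert _ _))

lemma mem_gens4 : (X 2 * X 3 ^ (b-1) : P4) ∈ gens a b :=
  Set.mem_insert_of_mem _ (Set.mem_insert_of_mem _ (Set.mem_insert_of_mem _ rfl))

lemma zero3' (i' j' : ℕ) :
    (X 2 ^ (i'+1) * X 3 ^ (j'+(b-1)) : P4) ∈ Ideal.span (gens a b) := by
  have h : (X 2 ^ (i'+1) * X 3 ^ (j'+(b-1)) : P4)
      = (X 2 ^ i' * X 3 ^ j') * (X 2 * X 3 ^ (b-1)) := by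
    rw [pow_add, pow_add, pow_one]; ring
  rw [h]
  exact Ideal.mul_mem_left _ _ (Ideal.subset_span (mem_gens4 a b))

lemma rel4 (j' : ℕ) :
    (X 3 ^ (j'+b) + C (a:ℂ) * (X 2 ^ (a-1) * X 3 ^ j') : P4) ∈ Ideal.span (gens a b) := by
  have h : (X 3 ^ (j'+b) + C (a:ℂ) * (X 2 ^ (a-1) * X 3 ^ j') : P4)
      = (X 3 ^ j') * (C (a:ℂ) * X 2 ^ (a-1) + X 3 ^ b) := by
    rw [pow_add]; ring
  rw [h]
  exact Ideal.mul_mem_left _ _ (Ideal.subset_span (mem_gens3 a b))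

lemma rel5 (i' j : ℕ) :
    (C (a:ℂ) * (X 2 ^ (i'+(a-1)) * X 3 ^ j) + X 2 ^ i' * X 3 ^ (j+b) : P4)
      ∈ Ideal.span (gens a b) := by
  have h : (C (a:ℂ) * (X 2 ^ (i'+(a-1)) * X 3 ^ j) + X 2 ^ i' * X 3 ^ (j+b) : P4)
      = (X 2 ^ i' * X 3 ^ j) * (C (a:ℂ) * X 2 ^ (a-1) + X 3 ^ b) := by
    rw [pow_add, pow_add]; ring
  rw [h]
  exact Ideal.mul_mem_left _ _ (Ideal.subset_span (mem_gens3 a b))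

lemma monX (n : Fin 4) (m : Fin 4 →₀ ℕ) (h : m n ≠ 0) (hg : (X n : P4) ∈ gens a b) :
    (monomial m (1:ℂ) : P4) ∈ Ideal.span (gens a b) := by
  have hexp : (m - Finsupp.single n 1) + Finsupp.single n 1 = m := by
    ext t
    by_cases hnt : n = t
    · subst hnt
      simp [Finsupp.add_apply, Finsupp.tsub_apply, Finsupp.single_apply]
      omega
    · simp only [Finsupp.add_apply, Finsupp.tsub_apply, Finsupp.single_apply, if_neg hnt]
      omega
  have key : (monomial m (1:ℂ) : P4) = monomial (m - Finsupp.single n 1) 1 * X n := by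
    rw [← pow_one (X n : P4), X_pow_eq_monomial, monomial_mul, mul_one, hexp]
  rw [key]
  exact Ideal.mul_mem_left _ _ (Ideal.subset_span hg)

variable (ha : 2 ≤ a) (hb : 2 ≤ b)
include ha hb

lemma basis_mem (i j : ℕ) (hi : i < a) (hj : j < b - 1) :
    piq a b (X 2 ^ i * X 3 ^ j) ∈ Submodule.span ℂ (Set.range (v a b)) := by
  rw [← monomial_E]
  exact Submodule.subset_span ⟨Sum.inl (⟨i, hi⟩, ⟨j, hj⟩), rfl⟩

lemma zero_mem' (i j : ℕ) (hi : 1 ≤ i) (hj : b - 1 ≤ j) :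
    piq a b (X 2 ^ i * X 3 ^ j : P4) = 0 := by
  rw [piq, Ideal.Quotient.mkₐ_eq_mk, Ideal.Quotient.eq_zero_iff_mem]
  have h := zero3' a b (i-1) (j-(b-1))
  rwa [show i - 1 + 1 = i by omega, show j - (b-1) + (b-1) = j by omega] at h

lemma XX_mem_span (i j : ℕ) :
    piq a b (X 2 ^ i * X 3 ^ j) ∈ Submodule.span ℂ (Set.range (v a b)) := by
  by_cases h5 : a ≤ i
  · -- i ≥ a : the class is zero
    have hrel := rel5 a b (i-(a-1)) j
    rw [show i - (a-1) + (a-1) = i by omega] at hrel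
    have h0 : piq a b (C (a:ℂ) * (X 2 ^ i * X 3 ^ j) + X 2 ^ (i-(a-1)) * X 3 ^ (j+b)) = 0 := by
      rw [piq, Ideal.Quotient.mkₐ_eq_mk, Ideal.Quotient.eq_zero_iff_mem]; exact hrel
    have h1 : piq a b (X 2 ^ (i-(a-1)) * X 3 ^ (j+b)) = 0 := by
      have := zero_mem' a b ha hb (i-(a-1)) (j+b) (by omega) (by omega)
      exact this
    rw [map_add, h1, add_zero, ← smul_eq_C_mul, map_smul] at h0
    have ha0 : (a:ℂ) ≠ 0 := Nat.cast_ne_zero.mpr (by omega)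
    have h2 : piq a b (X 2 ^ i * X 3 ^ j) = 0 := by
      have hc := congrArg (fun z => (a:ℂ)⁻¹ • z) h0
      simpa [smul_smul, inv_mul_cancel₀ ha0] using hc
    rw [h2]; exact Submodule.zero_mem _
  · by_cases h1 : 1 ≤ i
    · by_cases hj : j < b - 1
      · exact basis_mem a b ha hb i j (by omega) hj
      · rw [zero_mem' a b ha hb i j h1 (by omega)]; exact Submodule.zero_mem _
    · -- i = 0
      have hi0 : i = 0 := by omega
      subst hi0
      by_cases hj : j < b - 1
      · exact basis_mem a b ha hb 0 j (by omega) hj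
      · by_cases hj2 : j = b - 1
        · subst hj2
          rw [← monomial_E]
          exact Submodule.subset_span ⟨Sum.inr (), rfl⟩
        · -- j ≥ b
          have hjb : b ≤ j := by omega
          have hrel := rel4 a b (j-b)
          rw [show j - b + b = j by omega] at hrel
          have h0 : piq a b (X 3 ^ j + C (a:ℂ) * (X 2 ^ (a-1) * X 3 ^ (j-b))) = 0 := by
            rw [piq, Ideal.Quotient.mkₐ_eq_mk, Ideal.Quotient.eq_zero_iff_mem]; exact hrel
          rw [map_add, ← smul_eq_C_mul, map_smul, add_eq_zero_iff_eq_neg] at h0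
          have hX3 : piq a b (X 2 ^ 0 * X 3 ^ j) = -((a:ℂ) • piq a b (X 2 ^ (a-1) * X 3 ^ (j-b))) := by
            rw [pow_zero, one_mul, h0]
          rw [hX3]
          apply Submodule.neg_mem
          apply Submodule.smul_mem
          by_cases hjb2 : j - b < b - 1
          · exact basis_mem a b ha hb (a-1) (j-b) (by omega) hjb2
          · rw [zero_mem' a b ha hb (a-1) (j-b) (by omega) (by omega)]
            exact Submodule.zero_mem _

lemma all_mem_span (p : P4) : piq a b p ∈ Submodule.span ℂ (Set.range (v a b)) := by
  induction p using MvPolynomial.induction_on' with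
  | monomial m c =>
    have hmc : (monomial m c : P4) = c • monomial m 1 := by
      rw [smul_monomial, smul_eq_mul, mul_one]
    rw [hmc, map_smul]
    apply Submodule.smul_mem
    by_cases h0 : m 0 = 0 ∧ m 1 = 0
    · rw [eq_E_self m h0.1 h0.2, monomial_E]
      exact XX_mem_span a b ha hb (m 2) (m 3)
    · have hz : piq a b (monomial m 1) = 0 := by
        rw [piq, Ideal.Quotient.mkₐ_eq_mk, Ideal.Quotient.eq_zero_iff_mem]
        rcases Decidable.not_and_iff_or_not.mp h0 with h | h
        · exact monX a b 0 m h (Set.mem_insert _ _)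
        · exact monX a b 1 m h (Set.mem_insert_of_mem _ (Set.mem_insert _ _))
      rw [hz]; exact Submodule.zero_mem _
  | add p q hp hq =>
    rw [map_add]
    exact Submodule.add_mem _ hp hq

lemma span_v_top : Submodule.span ℂ (Set.range (v a b)) = ⊤ := by
  rw [eq_top_iff]
  rintro q -
  obtain ⟨p, rfl⟩ := Ideal.Quotient.mkₐ_surjective ℂ (Ideal.span (gens a b)) q
  exact all_mem_span a b ha hb p

end Main3


section Main4

variable (a b : ℕ)

/-- Scaling constants of the dual pairing. -/
noncomputable def cval : Idx a b → ℂ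
  | .inl _ => 1
  | .inr _ => -(a:ℂ)

variable (ha : 2 ≤ a) (hb : 2 ≤ b)
include ha hb

lemma coeff_mu_e (i0 i : Idx a b) :
    coeff (mu a b i0 + e a b i) (Fd a b) = if i = i0 then cval a b i0 else 0 := by
  classical
  rw [coeff_Fd]
  rcases i0 with ⟨⟨i2,hi2⟩,⟨j2,hj2⟩⟩ | u0 <;> rcases i with ⟨⟨i1,hi1⟩,⟨j1,hj1⟩⟩ | u <;>
    simp only [mu, e, cval, E_add_E, E_eq_E_iff, Sum.inl.injEq, Prod.mk.injEq, Fin.mk.injEq,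
      reduceCtorEq, if_false, Fin.val_mk, eq_iff_true_of_subsingleton, if_true, true_and, and_true] <;>
    split_ifs <;> first | ring1 | (exfalso; omega) | simp_all

lemma indep : LinearIndependent ℂ (v a b) := by
  classical
  rw [Fintype.linearIndependent_iff]
  intro g hg
  set p : P4 := ∑ i, g i • monomial (e a b i) 1 with hp
  have hπ : piq a b p = 0 := by
    rw [hp, map_sum]
    simp only [map_smul]
    exact hg
  have hpJ : p ∈ Ideal.span (gens a b) := by
    rwa [piq, Ideal.Quotient.mkₐ_eq_mk, Ideal.Quotient.eq_zero_iff_mem] at hπ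
  have hK : eps p (Fd a b) = 0 := span_gens_le_K a b ha hb hpJ
  intro i0
  have hrw : eps p (Fd a b) = ∑ i, g i • (shift (e a b i) (Fd a b)) := by
    rw [hp, map_sum, LinearMap.sum_apply]
    apply Finset.sum_congr rfl
    intro i _
    rw [map_smul, eps_monomial, one_smul, LinearMap.smul_apply]
  have hc : coeff (mu a b i0) (eps p (Fd a b)) = 0 := by rw [hK, coeff_zero]
  rw [hrw, coeff_sum] at hc
  simp only [coeff_smul, coeff_shift, coeff_mu_e a b ha hb i0, smul_ite, smul_zero] at hc
  rw [Finset.sum_ite_eq' Finset.univ i0 (fun i => g i • cval a b i0)] at hc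
  simp only [Finset.mem_univ, if_true, smul_eq_mul] at hc
  have ha0 : (a:ℂ) ≠ 0 := Nat.cast_ne_zero.mpr (by omega)
  rcases mul_eq_zero.mp hc with h | h
  · exact h
  · exfalso
    rcases i0 with ⟨⟨i2,hi2⟩,⟨j2,hj2⟩⟩ | u0
    · simp [cval] at h
    · simp [cval] at h
      omega

end Main4

end MilnorDualChain

/-- The Milnor number of the dual chain-type singularity
`x₁² + x₂² + x₃^a + x₃ x₄^b` is `a(b-1)+1`. -/
theorem milnor_number_dual_chain (a b : ℕ) (ha : 2 ≤ a) (hb : 2 ≤ b) :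
    FiniteDimensional ℂ
      (MvPolynomial (Fin 4) ℂ ⧸
        jacobianIdeal (X 0 ^ 2 + X 1 ^ 2 + X 2 ^ a + X 2 * X 3 ^ b)) ∧
    Module.finrank ℂ
      (MvPolynomial (Fin 4) ℂ ⧸
        jacobianIdeal (X 0 ^ 2 + X 1 ^ 2 + X 2 ^ a + X 2 * X 3 ^ b)) = a * (b - 1) + 1 := by
  classical
  rw [MilnorDualChain.J_eq a b ha hb]
  have B : Module.Basis (MilnorDualChain.Idx a b) ℂ (MilnorDualChain.Rq a b) :=
    Module.Basis.mk (MilnorDualChain.indep a b ha hb)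
      (le_of_eq (MilnorDualChain.span_v_top a b ha hb).symm)
  constructor
  · exact Module.Finite.of_basis B
  · rw [Module.finrank_eq_card_basis B]
    simp [MilnorDualChain.Idx]
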